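/- Let n ≥ 2 and let 1_* : 𝒜_n → 𝒜_n be the rotation automorphism sending Q = (E_0, E_1, …, E_n; γ_i, δ_i) to (E_0, E_2, …, E_{n+1}; γ_{i+1}, δ_{i+1}) (indices other than 0 modulo n). Then there exists a natural isomorphism β_1 : Id_{𝒜_n} ≅ 1_* whose component at each object Q has edge maps given by the fractional monodromies, i.e., the i-th component of β_1(Q) : Q → 1_*Q is T_i = γ_{i+1} ∘ δ_i : E_i → E_{i+1} for i = 1, …, n (together with a suitable isomorphism E_0 → E_0 as vertex component). Consequently, setting β_k := (β_1)^k for k ∈ ℤ, the strict action of ℤ on 𝒜_n obtained by composing the projection ℤ → ℤ/n with k ↦ k_* is coboundary: β_0 = id and β_{k+l} = (k_* β_l) ∘ β_k for all k, l ∈ ℤ. -/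

import Mathlib

/-!
STATEMENT 5: the fractional monodromies `Tᵢ = γ_{i+1} ∘ δᵢ` assemble into a
natural isomorphism `β₁ : Id ≅ 1_*` between the identity of `𝒜_n` and the
rotation automorphism `1_*`; consequently (setting `β_m := β₁^m`) the strict
action of `ℤ` on `𝒜_n` obtained by composing `ℤ → ℤ/n` with `a ↦ a_*` is
coboundary: there are natural isomorphisms `β_m : Id ≅ (m mod n)_*` with
`β₀ = id` and `β_{p+q} = (p_* β_q) ∘ β_p` (the latter equations are stated
via `eqToHom` along the equalities `0_* = Id`, `q_* ⋙ p_* = (p+q)_*`).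
-/

open CategoryTheory

/-- An object of the category `𝒜_n` (for `n ≥ 2`): finite-dimensional `k`-vector
spaces `E₀` (vertex space) and `E i`, `i ∈ ℤ/n` (edge spaces, the paper's
`E_1, …, E_n`, indices mod `n`), with linear maps `γ i : E₀ → E i`,
`δ i : E i → E₀` satisfying (C1) `γᵢ ∘ δᵢ = id`,
(C2) `Tᵢ := γ_{i+1} ∘ δᵢ : Eᵢ → E_{i+1}` is an isomorphism, and
(C3) `γᵢ ∘ δⱼ = 0` for `i ≠ j, j + 1 (mod n)`. -/
structure AObj (k : Type) [Field k] (n : ℕ) : Type 1 where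
  V : Type
  [addV : AddCommGroup V]
  [modV : Module k V]
  [fdV : FiniteDimensional k V]
  E : ZMod n → Type
  [addE : ∀ i, AddCommGroup (E i)]
  [modE : ∀ i, Module k (E i)]
  [fdE : ∀ i, FiniteDimensional k (E i)]
  γ : ∀ i : ZMod n, V →ₗ[k] E i
  δ : ∀ i : ZMod n, E i →ₗ[k] V
  c1 : ∀ i, (γ i).comp (δ i) = LinearMap.id
  c2 : ∀ i, Function.Bijective ((γ (i + 1)).comp (δ i))
  c3 : ∀ i j : ZMod n, i ≠ j → i ≠ j + 1 → (γ i).comp (δ j) = 0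

attribute [instance] AObj.addV AObj.modV AObj.fdV AObj.addE AObj.modE AObj.fdE

variable {k : Type} [Field k] {n : ℕ}

/-- A morphism in `𝒜_n`: linear maps on vertex and edge spaces commuting with the
structure maps `γ` and `δ`. -/
@[ext]
structure AHom (Q Q' : AObj k n) where
  f₀ : Q.V →ₗ[k] Q'.V
  f : ∀ i, Q.E i →ₗ[k] Q'.E i
  commγ : ∀ i, (f i).comp (Q.γ i) = (Q'.γ i).comp f₀
  commδ : ∀ i, f₀.comp (Q.δ i) = (Q'.δ i).comp (f i)

theorem AHom.γ_apply {Q Q' : AObj k n} (φ : AHom Q Q') (i : ZMod n) (x : Q.V) :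
    φ.f i (Q.γ i x) = Q'.γ i (φ.f₀ x) := LinearMap.congr_fun (φ.commγ i) x

theorem AHom.δ_apply {Q Q' : AObj k n} (φ : AHom Q Q') (i : ZMod n) (x : Q.E i) :
    φ.f₀ (Q.δ i x) = Q'.δ i (φ.f i x) := LinearMap.congr_fun (φ.commδ i) x

instance : Category (AObj k n) where
  Hom := AHom
  id Q :=
    { f₀ := LinearMap.id
      f := fun _ => LinearMap.id
      commγ := fun i => by ext x; simp
      commδ := fun i => by ext x; simp }
  comp φ ψ :=
    { f₀ := ψ.f₀.comp φ.f₀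
      f := fun i => (ψ.f i).comp (φ.f i)
      commγ := fun i => by ext x; simp [AHom.γ_apply]
      commδ := fun i => by ext x; simp [AHom.δ_apply] }
  id_comp φ := by apply AHom.ext <;> ext x <;> simp
  comp_id φ := by apply AHom.ext <;> ext x <;> simp
  assoc φ ψ χ := by apply AHom.ext <;> ext x <;> simp

/-- The rotation of an object of `𝒜_n` by `a ∈ ℤ/n`:
`a_*Q = (E₀, E_{1+a}, …, E_{n+a}; γ_{i+a}, δ_{i+a})`. -/
def rotObj (a : ZMod n) (Q : AObj k n) : AObj k n where
  V := Q.V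
  E i := Q.E (i + a)
  γ i := Q.γ (i + a)
  δ i := Q.δ (i + a)
  c1 i := Q.c1 (i + a)
  c2 i := by
    have h := Q.c2 (i + a)
    have e : i + a + 1 = i + 1 + a := add_right_comm i a 1
    rw [e] at h
    exact h
  c3 i j hij hij' := by
    have e : j + a + 1 = j + 1 + a := add_right_comm j a 1
    refine Q.c3 (i + a) (j + a) (fun hc => hij (add_right_cancel hc))
      (fun hc => hij' ?_)
    rw [e] at hc
    exact add_right_cancel hc

/-- The rotation by `a ∈ ℤ/n` as a functor `a_* : 𝒜_n ⥤ 𝒜_n`. -/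
def rot (k : Type) [Field k] (n : ℕ) (a : ZMod n) : AObj k n ⥤ AObj k n where
  obj Q := rotObj a Q
  map {Q Q'} φ :=
    { f₀ := φ.f₀
      f := fun i => φ.f (i + a)
      commγ := fun i => φ.commγ (i + a)
      commδ := fun i => φ.commδ (i + a) }
  map_id Q := rfl
  map_comp φ ψ := rfl

/-- The strict action of `ℤ` on `𝒜_n` obtained by composing the projection
`ℤ → ℤ/n` with `a ↦ a_*`. -/
def rotZ (k : Type) [Field k] (n : ℕ) (m : ℤ) : AObj k n ⥤ AObj k n :=
  rot k n ((m : ZMod n))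

section Aux

open Finset

variable {k : Type} [Field k] {n : ℕ}

@[simp] lemma AObj.comp_f₀ {Q₁ Q₂ Q₃ : AObj k n} (φ : Q₁ ⟶ Q₂) (ψ : Q₂ ⟶ Q₃) :
    (φ ≫ ψ).f₀ = ψ.f₀.comp φ.f₀ := rfl

@[simp] lemma AObj.comp_f {Q₁ Q₂ Q₃ : AObj k n} (φ : Q₁ ⟶ Q₂) (ψ : Q₂ ⟶ Q₃) (i : ZMod n) :
    (φ ≫ ψ).f i = (ψ.f i).comp (φ.f i) := rfl

@[simp] lemma AObj.id_f₀ {Q : AObj k n} : (𝟙 Q : AHom Q Q).f₀ = LinearMap.id := rfl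

@[simp] lemma AObj.id_f {Q : AObj k n} (i : ZMod n) :
    (𝟙 Q : AHom Q Q).f i = LinearMap.id := rfl

@[simp] lemma rot_map_f₀ (a : ZMod n) {Q Q' : AObj k n} (φ : Q ⟶ Q') :
    ((rot k n a).map φ).f₀ = φ.f₀ := rfl

@[simp] lemma rot_map_f (a : ZMod n) {Q Q' : AObj k n} (φ : Q ⟶ Q') (i : ZMod n) :
    ((rot k n a).map φ).f i = φ.f (i + a) := rfl

/-- cast between edge spaces along an index equality. -/
def AObj.ecast (Q : AObj k n) {i j : ZMod n} (h : i = j) : Q.E i ≃ₗ[k] Q.E j :=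
  h ▸ LinearEquiv.refl k (Q.E i)

lemma AObj.ecast_rfl (Q : AObj k n) (i : ZMod n) :
    Q.ecast (rfl : i = i) = LinearEquiv.refl k (Q.E i) := rfl

lemma AObj.γ_ecast (Q : AObj k n) {i j : ZMod n} (h : i = j) :
    (Q.ecast h).toLinearMap.comp (Q.γ i) = Q.γ j := by subst h; rfl

lemma AObj.δ_ecast (Q : AObj k n) {i j : ZMod n} (h : i = j) :
    (Q.δ j).comp (Q.ecast h).toLinearMap = Q.δ i := by subst h; rfl

lemma AObj.γδ_ecast (Q : AObj k n) {i j : ZMod n} (h : i = j) :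
    (Q.γ j).comp (Q.δ i) = (Q.ecast h).toLinearMap := by
  subst h; exact Q.c1 i

lemma AObj.c1_apply (Q : AObj k n) (i : ZMod n) (x : Q.E i) :
    Q.γ i (Q.δ i x) = x := LinearMap.congr_fun (Q.c1 i) x

lemma AObj.c3_apply (Q : AObj k n) {i j : ZMod n} (h : i ≠ j) (h' : i ≠ j + 1)
    (x : Q.E j) : Q.γ i (Q.δ j x) = 0 := LinearMap.congr_fun (Q.c3 i j h h') x

lemma ZMod.self_ne_add_one (hn : 2 ≤ n) (i : ZMod n) : i ≠ i + 1 := by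
  haveI : NeZero n := ⟨by omega⟩
  haveI : Fact (1 < n) := ⟨by omega⟩
  intro h
  have : (0 : ZMod n) = 1 := by
    have := h
    nth_rewrite 1 [← add_zero i] at this
    exact add_left_cancel this
  exact one_ne_zero this.symm

/-- the vertex automorphism `u = (∑ i, δᵢ ∘ γᵢ) - id`. -/
noncomputable def uMap (hn : 2 ≤ n) (Q : AObj k n) : Q.V →ₗ[k] Q.V :=
  haveI : NeZero n := ⟨by omega⟩
  (∑ i : ZMod n, (Q.δ i).comp (Q.γ i)) - LinearMap.id

lemma uMap_apply (hn : 2 ≤ n) (Q : AObj k n) (x : Q.V) :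
    haveI : NeZero n := ⟨by omega⟩
    uMap hn Q x = (∑ i : ZMod n, Q.δ i (Q.γ i x)) - x := by
  haveI : NeZero n := ⟨by omega⟩
  simp [uMap, LinearMap.sum_apply]

lemma sum_two_terms (hn : 2 ≤ n) {M : Type} [AddCommGroup M]
    (t : ZMod n → M) (i : ZMod n)
    (h0 : ∀ j, j ≠ i → j ≠ i + 1 → t j = 0) :
    haveI : NeZero n := ⟨by omega⟩
    ∑ j : ZMod n, t j = t i + t (i + 1) := by
  haveI : NeZero n := ⟨by omega⟩
  rw [← Finset.sum_subset (Finset.subset_univ {i, i + 1})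
    (fun j _ hj => h0 j (fun h => hj (by simp [h])) (fun h => hj (by simp [h])))]
  exact Finset.sum_pair (ZMod.self_ne_add_one hn i)

/-- `γ_{i+1} ∘ u = T_i ∘ γ_i`. -/
lemma γ_uMap (hn : 2 ≤ n) (Q : AObj k n) (i : ZMod n) (x : Q.V) :
    Q.γ (i + 1) (uMap hn Q x) = Q.γ (i + 1) (Q.δ i (Q.γ i x)) := by
  haveI : NeZero n := ⟨by omega⟩
  rw [uMap_apply hn Q x, map_sub, map_sum]
  rw [sum_two_terms hn (fun j => Q.γ (i+1) (Q.δ j (Q.γ j x))) i (fun j hj hj' => by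
    rw [Q.c3_apply (fun h => hj' h.symm) (fun h => hj (add_right_cancel h).symm)])]
  rw [Q.c1_apply]
  abel

/-- `u ∘ δ_i = δ_{i+1} ∘ T_i`. -/
lemma uMap_δ (hn : 2 ≤ n) (Q : AObj k n) (i : ZMod n) (x : Q.E i) :
    uMap hn Q (Q.δ i x) = Q.δ (i + 1) (Q.γ (i + 1) (Q.δ i x)) := by
  haveI : NeZero n := ⟨by omega⟩
  rw [uMap_apply]
  rw [sum_two_terms hn (fun j => Q.δ j (Q.γ j (Q.δ i x))) i (fun j hj hj' => by
    rw [Q.c3_apply hj hj', map_zero])]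
  rw [Q.c1_apply]
  abel

lemma uMap_bijective (hn : 2 ≤ n) (Q : AObj k n) : Function.Bijective (uMap hn Q) := by
  haveI : NeZero n := ⟨by omega⟩
  rw [Function.Bijective, ← LinearMap.injective_iff_surjective, and_self]
  rw [← LinearMap.ker_eq_bot, LinearMap.ker_eq_bot']
  intro x hx
  have hγ : ∀ i : ZMod n, Q.γ i x = 0 := by
    intro i
    have h1 : Q.γ (i + 1) (Q.δ i (Q.γ i x)) = 0 := by
      rw [← γ_uMap hn Q i x, hx, map_zero]
    exact (Q.c2 i).injective (by simpa using h1)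
  have := uMap_apply hn Q x
  rw [hx] at this
  have : (0:Q.V) = 0 - x := by simpa [hγ] using this
  simpa using this.symm

end Aux
section Aux2

variable {k : Type} [Field k] {n : ℕ}

lemma AObj.ecast_symm (Q : AObj k n) {i j : ZMod n} (h : i = j) :
    Q.ecast h.symm = (Q.ecast h).symm := by subst h; rfl

/-- `u` as a linear automorphism. -/
noncomputable def uEquiv (hn : 2 ≤ n) (Q : AObj k n) : Q.V ≃ₗ[k] Q.V :=
  LinearEquiv.ofBijective (uMap hn Q) (uMap_bijective hn Q)

lemma uEquiv_apply (hn : 2 ≤ n) (Q : AObj k n) (x : Q.V) :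
    uEquiv hn Q x = uMap hn Q x := rfl

lemma zpow_succ_apply (hn : 2 ≤ n) (Q : AObj k n) (m : ℤ) (x : Q.V) :
    ((uEquiv hn Q) ^ (m + 1)) x = uMap hn Q (((uEquiv hn Q) ^ m) x) := by
  rw [add_comm, zpow_add, zpow_one]
  rfl

lemma zpow_pred_apply (hn : 2 ≤ n) (Q : AObj k n) (m : ℤ) (x : Q.V) :
    uMap hn Q (((uEquiv hn Q) ^ (m - 1)) x) = ((uEquiv hn Q) ^ m) x := by
  rw [← zpow_succ_apply, sub_add_cancel]

/-- inverse relation: `u⁻¹ (δ_{i+1} (T_i y)) = δ_i y`. -/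
lemma uEquiv_symm_δ (hn : 2 ≤ n) (Q : AObj k n) (i : ZMod n) (x : Q.E i) :
    ((uEquiv hn Q)⁻¹) (Q.δ (i + 1) (Q.γ (i + 1) (Q.δ i x))) = Q.δ i x := by
  have h := uMap_δ hn Q i x
  rw [← uEquiv_apply] at h
  rw [← h]
  show (uEquiv hn Q).symm _ = _
  exact (uEquiv hn Q).symm_apply_apply _

/-- there is a `C : E j →ₗ E (j + m)` with `γ_{j+m} ∘ uᵐ = C ∘ γ_j`. -/
lemma exists_C (hn : 2 ≤ n) (Q : AObj k n) (m : ℤ) (j : ZMod n) :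
    ∃ C : Q.E j →ₗ[k] Q.E (j + (m : ZMod n)),
      ∀ x : Q.V, Q.γ (j + (m : ZMod n)) (((uEquiv hn Q) ^ m) x) = C (Q.γ j x) := by
  induction m using Int.induction_on with
  | zero =>
      refine ⟨(Q.ecast (by push_cast; ring)).toLinearMap, fun x => ?_⟩
      rw [← Q.γ_ecast (show j = j + ((0:ℤ) : ZMod n) by push_cast; ring)]
      simp
  | succ m ih =>
      obtain ⟨C, hC⟩ := ih
      have e : (j + ((m : ℤ) : ZMod n)) + 1 = j + (((m : ℤ) + 1 : ℤ) : ZMod n) := by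
        push_cast; ring
      refine ⟨(Q.ecast e).toLinearMap.comp
        (((Q.γ ((j + ((m : ℤ) : ZMod n)) + 1)).comp (Q.δ (j + ((m : ℤ) : ZMod n)))).comp C),
        fun x => ?_⟩
      have h1 : Q.γ (j + (((m : ℤ) + 1 : ℤ) : ZMod n)) (((uEquiv hn Q) ^ ((m : ℤ) + 1)) x)
          = (Q.ecast e) (Q.γ ((j + ((m : ℤ) : ZMod n)) + 1) (((uEquiv hn Q) ^ ((m : ℤ) + 1)) x)) := by
        rw [← Q.γ_ecast e]; rfl
      rw [h1, zpow_succ_apply, γ_uMap hn Q (j + ((m : ℤ) : ZMod n)), hC]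
      rfl
  | pred m ih =>
      obtain ⟨C, hC⟩ := ih
      have e : (j + ((-(m : ℤ) - 1 : ℤ) : ZMod n)) + 1 = j + ((-(m : ℤ) : ℤ) : ZMod n) := by
        push_cast; ring
      set i := j + ((-(m : ℤ) - 1 : ℤ) : ZMod n) with hi
      let T : Q.E i ≃ₗ[k] Q.E (i + 1) :=
        LinearEquiv.ofBijective ((Q.γ (i + 1)).comp (Q.δ i)) (Q.c2 i)
      refine ⟨(T.symm.toLinearMap.comp ((Q.ecast e).symm.toLinearMap)).comp C, fun x => ?_⟩
      have key : Q.γ (i + 1) (uMap hn Q (((uEquiv hn Q) ^ (-(m:ℤ) - 1)) x))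
          = T (Q.γ i (((uEquiv hn Q) ^ (-(m:ℤ) - 1)) x)) := γ_uMap hn Q i _
      rw [zpow_pred_apply] at key
      have key2 : Q.γ i (((uEquiv hn Q) ^ (-(m:ℤ) - 1)) x)
          = T.symm (Q.γ (i + 1) (((uEquiv hn Q) ^ (-(m:ℤ))) x)) := by
        rw [key, T.symm_apply_apply]
      rw [key2]
      have h2 : Q.γ (i + 1) (((uEquiv hn Q) ^ (-(m:ℤ))) x)
          = (Q.ecast e).symm (Q.γ (j + ((-(m : ℤ) : ℤ) : ZMod n)) (((uEquiv hn Q) ^ (-(m:ℤ))) x)) := by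
        rw [← Q.ecast_symm, ← Q.γ_ecast e.symm]; rfl
      rw [h2, hC]
      rfl

/-- there is a `D : E j →ₗ E (j + m)` with `uᵐ ∘ δ_j = δ_{j+m} ∘ D`. -/
lemma exists_D (hn : 2 ≤ n) (Q : AObj k n) (m : ℤ) (j : ZMod n) :
    ∃ D : Q.E j →ₗ[k] Q.E (j + (m : ZMod n)),
      ∀ x : Q.E j, ((uEquiv hn Q) ^ m) (Q.δ j x) = Q.δ (j + (m : ZMod n)) (D x) := by
  induction m using Int.induction_on with
  | zero =>
      refine ⟨(Q.ecast (by push_cast; ring)).toLinearMap, fun x => ?_⟩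
      have h := LinearMap.congr_fun
        (Q.δ_ecast (show j = j + ((0:ℤ) : ZMod n) by push_cast; ring)) x
      simpa using h.symm
  | succ m ih =>
      obtain ⟨D, hD⟩ := ih
      have e : (j + ((m : ℤ) : ZMod n)) + 1 = j + (((m : ℤ) + 1 : ℤ) : ZMod n) := by
        push_cast; ring
      refine ⟨((Q.ecast e).toLinearMap.comp
        ((Q.γ ((j + ((m : ℤ) : ZMod n)) + 1)).comp (Q.δ (j + ((m : ℤ) : ZMod n))))).comp D,
        fun x => ?_⟩
      calc ((uEquiv hn Q) ^ ((m : ℤ) + 1)) (Q.δ j x)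
          = uMap hn Q (((uEquiv hn Q) ^ (m : ℤ)) (Q.δ j x)) := zpow_succ_apply hn Q _ _
        _ = uMap hn Q (Q.δ (j + ((m : ℤ) : ZMod n)) (D x)) := by rw [hD]
        _ = Q.δ ((j + ((m : ℤ) : ZMod n)) + 1)
              (Q.γ ((j + ((m : ℤ) : ZMod n)) + 1) (Q.δ (j + ((m : ℤ) : ZMod n)) (D x))) :=
            uMap_δ hn Q _ _
        _ = Q.δ (j + (((m : ℤ) + 1 : ℤ) : ZMod n)) ((Q.ecast e)
              (Q.γ ((j + ((m : ℤ) : ZMod n)) + 1) (Q.δ (j + ((m : ℤ) : ZMod n)) (D x)))) :=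
            (LinearMap.congr_fun (Q.δ_ecast e) _).symm
        _ = _ := rfl
  | pred m ih =>
      obtain ⟨D, hD⟩ := ih
      have e : (j + ((-(m : ℤ) - 1 : ℤ) : ZMod n)) + 1 = j + ((-(m : ℤ) : ℤ) : ZMod n) := by
        push_cast; ring
      set i := j + ((-(m : ℤ) - 1 : ℤ) : ZMod n) with hi
      let T : Q.E i ≃ₗ[k] Q.E (i + 1) :=
        LinearEquiv.ofBijective ((Q.γ (i + 1)).comp (Q.δ i)) (Q.c2 i)
      refine ⟨(T.symm.toLinearMap.comp ((Q.ecast e).symm.toLinearMap)).comp D, fun x => ?_⟩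
      have h1 : ((uEquiv hn Q) ^ (-(m:ℤ) - 1)) (Q.δ j x)
          = ((uEquiv hn Q)⁻¹) (((uEquiv hn Q) ^ (-(m:ℤ))) (Q.δ j x)) := by
        have h' : (-(m:ℤ) - 1) = (-1) + (-(m:ℤ)) := by ring
        rw [h', zpow_add, zpow_neg_one]; rfl
      set z := (Q.ecast e).symm (D x) with hz
      have h2 : Q.δ (j + ((-(m : ℤ) : ℤ) : ZMod n)) (D x) = Q.δ (i + 1) z := by
        conv_lhs => rw [← (Q.ecast e).apply_symm_apply (D x)]
        exact LinearMap.congr_fun (Q.δ_ecast e) z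
      have h4 : ((uEquiv hn Q)⁻¹) (Q.δ (i + 1) z) = Q.δ i (T.symm z) := by
        have h5 := uEquiv_symm_δ hn Q i (T.symm z)
        have h6 : Q.γ (i + 1) (Q.δ i (T.symm z)) = z := T.apply_symm_apply z
        rw [h6] at h5
        exact h5
      rw [h1, hD, h2, h4]
      rfl

end Aux2
section Aux3

variable {k : Type} [Field k] {n : ℕ}

/-- the two-sided inverse computation. -/
lemma key2 (hn : 2 ≤ n) (Q : AObj k n) (m m' : ℤ) (h : m' + m = 0) (i j : ZMod n)
    (hj : j = i + (m : ZMod n)) (x : Q.E i) :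
    Q.γ i (((uEquiv hn Q) ^ m') (Q.δ j (Q.γ j (((uEquiv hn Q) ^ m) (Q.δ i x))))) = x := by
  subst hj
  obtain ⟨D, hD⟩ := exists_D hn Q m i
  rw [hD, Q.c1_apply, ← hD]
  have h1 : ((uEquiv hn Q) ^ m') (((uEquiv hn Q) ^ m) (Q.δ i x))
      = ((uEquiv hn Q) ^ (m' + m)) (Q.δ i x) := by
    rw [zpow_add]; rfl
  rw [h1, h, zpow_zero]
  exact Q.c1_apply i x

/-- morphisms intertwine `u`. -/
lemma semiconj_u (hn : 2 ≤ n) {Q Q' : AObj k n} (ψ : AHom Q Q') (x : Q.V) :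
    ψ.f₀ (uMap hn Q x) = uMap hn Q' (ψ.f₀ x) := by
  haveI : NeZero n := ⟨by omega⟩
  rw [uMap_apply, uMap_apply, map_sub, map_sum]
  congr 1
  refine Finset.sum_congr rfl fun i _ => ?_
  rw [ψ.δ_apply, ψ.γ_apply]

lemma semiconj_uzpow (hn : 2 ≤ n) {Q Q' : AObj k n} (ψ : AHom Q Q') (m : ℤ) (x : Q.V) :
    ψ.f₀ (((uEquiv hn Q) ^ m) x) = ((uEquiv hn Q') ^ m) (ψ.f₀ x) := by
  induction m using Int.induction_on with
  | zero => simp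
  | succ m ih =>
      rw [zpow_succ_apply, zpow_succ_apply, ← ih, semiconj_u]
  | pred m ih =>
      have h1 : uMap hn Q' (ψ.f₀ (((uEquiv hn Q) ^ (-(m:ℤ) - 1)) x))
          = uMap hn Q' (((uEquiv hn Q') ^ (-(m:ℤ) - 1)) (ψ.f₀ x)) := by
        rw [← semiconj_u hn ψ, zpow_pred_apply, zpow_pred_apply, ih]
      exact (uMap_bijective hn Q').injective h1

/-- the component of `β_m` at `Q`. -/
noncomputable def bHom (hn : 2 ≤ n) (m : ℤ) (Q : AObj k n) :
    AHom Q (rotObj ((m : ZMod n)) Q) where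
  f₀ := ((uEquiv hn Q) ^ m).toLinearMap
  f i := (Q.γ (i + (m : ZMod n))).comp
    ((((uEquiv hn Q) ^ m).toLinearMap).comp (Q.δ i))
  commγ := by
    intro i
    apply LinearMap.ext
    intro x
    obtain ⟨C, hC⟩ := exists_C hn Q m i
    show Q.γ (i + (m : ZMod n)) (((uEquiv hn Q) ^ m) (Q.δ i (Q.γ i x)))
      = Q.γ (i + (m : ZMod n)) (((uEquiv hn Q) ^ m) x)
    rw [hC, hC, Q.c1_apply]
  commδ := by
    intro i
    apply LinearMap.ext
    intro x
    obtain ⟨D, hD⟩ := exists_D hn Q m i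
    show ((uEquiv hn Q) ^ m) (Q.δ i x)
      = Q.δ (i + (m : ZMod n)) (Q.γ (i + (m : ZMod n)) (((uEquiv hn Q) ^ m) (Q.δ i x)))
    rw [hD, Q.c1_apply]

lemma bHom_f (hn : 2 ≤ n) (m : ℤ) (Q : AObj k n) (i : ZMod n) (x : Q.E i) :
    (bHom hn m Q).f i x = Q.γ (i + (m : ZMod n)) (((uEquiv hn Q) ^ m) (Q.δ i x)) := rfl

lemma bHom_f₀_bij (hn : 2 ≤ n) (m : ℤ) (Q : AObj k n) :
    Function.Bijective ((bHom hn m Q).f₀) := ((uEquiv hn Q) ^ m).bijective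

lemma bHom_f_bij (hn : 2 ≤ n) (m : ℤ) (Q : AObj k n) (i : ZMod n) :
    Function.Bijective ((bHom hn m Q).f i) := by
  set g : Q.E (i + (m : ZMod n)) →ₗ[k] Q.E i :=
    (Q.γ i).comp ((((uEquiv hn Q) ^ (-m)).toLinearMap).comp (Q.δ (i + (m : ZMod n)))) with hg
  have hgf : ∀ x : Q.E i, g ((bHom hn m Q).f i x) = x := by
    intro x
    exact key2 hn Q m (-m) (by ring) i (i + (m : ZMod n)) rfl x
  have hfg : ∀ y : Q.E (i + (m : ZMod n)), (bHom hn m Q).f i (g y) = y := by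
    intro y
    have h := key2 hn Q (-m) m (by ring) (i + (m : ZMod n)) i
      (by push_cast; ring) y
    exact h
  exact ⟨Function.LeftInverse.injective hgf,
    Function.RightInverse.surjective (fun y => hfg y)⟩

lemma ofBijective_cancel {M N : Type} [AddCommGroup M] [AddCommGroup N]
    [Module k M] [Module k N] (f : M →ₗ[k] N) (hf : Function.Bijective f) (y : N) :
    f ((LinearEquiv.ofBijective f hf).symm y) = y :=
  (LinearEquiv.ofBijective f hf).apply_symm_apply y

/-- an `AHom` with bijective components is an isomorphism. -/
noncomputable def AHom.toIso {Q Q' : AObj k n} (φ : AHom Q Q')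
    (h₀ : Function.Bijective φ.f₀) (h : ∀ i, Function.Bijective (φ.f i)) :
    Q ≅ Q' where
  hom := φ
  inv :=
    { f₀ := (LinearEquiv.ofBijective φ.f₀ h₀).symm.toLinearMap
      f := fun i => (LinearEquiv.ofBijective (φ.f i) (h i)).symm.toLinearMap
      commγ := by
        intro i
        apply LinearMap.ext
        intro x
        apply (h i).injective
        show φ.f i ((LinearEquiv.ofBijective (φ.f i) (h i)).symm (Q'.γ i x))
          = φ.f i (Q.γ i ((LinearEquiv.ofBijective φ.f₀ h₀).symm x))
        rw [ofBijective_cancel (φ.f i) (h i), φ.γ_apply, ofBijective_cancel φ.f₀ h₀]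
      commδ := by
        intro i
        apply LinearMap.ext
        intro x
        apply h₀.injective
        show φ.f₀ ((LinearEquiv.ofBijective φ.f₀ h₀).symm (Q'.δ i x))
          = φ.f₀ (Q.δ i ((LinearEquiv.ofBijective (φ.f i) (h i)).symm x))
        rw [ofBijective_cancel φ.f₀ h₀, φ.δ_apply, ofBijective_cancel (φ.f i) (h i)] }
  hom_inv_id := by
    apply AHom.ext
    · apply LinearMap.ext; intro x
      exact (LinearEquiv.ofBijective φ.f₀ h₀).symm_apply_apply x
    · funext i; apply LinearMap.ext; intro x
      exact (LinearEquiv.ofBijective (φ.f i) (h i)).symm_apply_apply x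
  inv_hom_id := by
    apply AHom.ext
    · apply LinearMap.ext; intro x
      exact (LinearEquiv.ofBijective φ.f₀ h₀).apply_symm_apply x
    · funext i; apply LinearMap.ext; intro x
      exact (LinearEquiv.ofBijective (φ.f i) (h i)).apply_symm_apply x

end Aux3
section Aux4

open CategoryTheory

variable {k : Type} [Field k] {n : ℕ}

lemma bHom_natural (hn : 2 ≤ n) (m : ℤ) {Q Q' : AObj k n} (ψ : Q ⟶ Q') :
    (ψ ≫ (bHom hn m Q' : Q' ⟶ rotObj ((m : ZMod n)) Q'))
      = (bHom hn m Q : Q ⟶ rotObj ((m : ZMod n)) Q) ≫ (rot k n ((m : ZMod n))).map ψ := by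
  apply AHom.ext
  · apply LinearMap.ext
    intro x
    show ((uEquiv hn Q') ^ m) (ψ.f₀ x) = ψ.f₀ (((uEquiv hn Q) ^ m) x)
    rw [semiconj_uzpow hn ψ]
  · funext i
    apply LinearMap.ext
    intro x
    show Q'.γ (i + (m : ZMod n)) (((uEquiv hn Q') ^ m) (Q'.δ i (ψ.f i x)))
      = ψ.f (i + (m : ZMod n)) (Q.γ (i + (m : ZMod n)) (((uEquiv hn Q) ^ m) (Q.δ i x)))
    rw [ψ.γ_apply, semiconj_uzpow hn ψ, ψ.δ_apply]

/-- the natural isomorphism `β_m : Id ≅ m_*`. -/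
noncomputable def bIso (hn : 2 ≤ n) (m : ℤ) : 𝟭 (AObj k n) ≅ rotZ k n m :=
  NatIso.ofComponents
    (fun Q => (bHom hn m Q).toIso (bHom_f₀_bij hn m Q) (bHom_f_bij hn m Q))
    (fun {Q Q'} ψ => bHom_natural hn m ψ)

lemma bIso_hom_app (hn : 2 ≤ n) (m : ℤ) (Q : AObj k n) :
    (bIso hn m).hom.app Q = (bHom hn m Q : Q ⟶ rotObj ((m : ZMod n)) Q) := rfl

/-- the component of `β₁` at `Q`, with edge maps the fractional monodromies. -/
noncomputable def oneHom (hn : 2 ≤ n) (Q : AObj k n) : AHom Q (rotObj (1 : ZMod n) Q) where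
  f₀ := uMap hn Q
  f i := (Q.γ (i + 1)).comp (Q.δ i)
  commγ := by
    intro i
    apply LinearMap.ext
    intro x
    show Q.γ (i + 1) (Q.δ i (Q.γ i x)) = Q.γ (i + 1) (uMap hn Q x)
    rw [γ_uMap hn Q i x]
  commδ := by
    intro i
    apply LinearMap.ext
    intro x
    show uMap hn Q (Q.δ i x) = Q.δ (i + 1) (Q.γ (i + 1) (Q.δ i x))
    exact uMap_δ hn Q i x

/-- `β₁ : Id ≅ 1_*`. -/
noncomputable def β₁Iso (hn : 2 ≤ n) : 𝟭 (AObj k n) ≅ rot k n (1 : ZMod n) :=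
  NatIso.ofComponents
    (fun Q => (oneHom hn Q).toIso (uMap_bijective hn Q) (fun i => Q.c2 i))
    (fun {Q Q'} ψ => by
      apply AHom.ext
      · apply LinearMap.ext
        intro x
        show uMap hn Q' (ψ.f₀ x) = ψ.f₀ (uMap hn Q x)
        rw [semiconj_u hn ψ]
      · funext i
        apply LinearMap.ext
        intro x
        show Q'.γ (i + 1) (Q'.δ i (ψ.f i x)) = ψ.f (i + 1) (Q.γ (i + 1) (Q.δ i x))
        rw [ψ.γ_apply, ψ.δ_apply])

/-- reindexing an object along a shift-compatible injection. -/
def mkShift (Q : AObj k n) (f : ZMod n → ZMod n) (hinj : Function.Injective f)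
    (hf : ∀ i, f i + 1 = f (i + 1)) : AObj k n where
  V := Q.V
  E i := Q.E (f i)
  γ i := Q.γ (f i)
  δ i := Q.δ (f i)
  c1 i := Q.c1 (f i)
  c2 i := by
    have h := Q.c2 (f i)
    rw [hf i] at h
    exact h
  c3 i j hij hij' := Q.c3 (f i) (f j) (fun hc => hij (hinj hc))
    (fun hc => hij' (hinj (by rw [hc, hf j])))

lemma mkShift_congr (Q : AObj k n) {f g : ZMod n → ZMod n} (h : f = g)
    (hinjf : Function.Injective f) (hff : ∀ i, f i + 1 = f (i + 1))
    (hinjg : Function.Injective g) (hgg : ∀ i, g i + 1 = g (i + 1)) :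
    mkShift Q f hinjf hff = mkShift Q g hinjg hgg := by subst h; rfl

/-- reindexing a morphism. -/
def mkShiftHom {Q Q' : AObj k n} (φ : AHom Q Q') (f : ZMod n → ZMod n)
    (hinj : Function.Injective f) (hf : ∀ i, f i + 1 = f (i + 1)) :
    AHom (mkShift Q f hinj hf) (mkShift Q' f hinj hf) where
  f₀ := φ.f₀
  f i := φ.f (f i)
  commγ i := φ.commγ (f i)
  commδ i := φ.commδ (f i)

lemma mkShiftHom_congr {Q Q' : AObj k n} (φ : AHom Q Q') {f g : ZMod n → ZMod n} (h : f = g)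
    (hinjf : Function.Injective f) (hff : ∀ i, f i + 1 = f (i + 1))
    (hinjg : Function.Injective g) (hgg : ∀ i, g i + 1 = g (i + 1)) :
    HEq (mkShiftHom φ f hinjf hff) (mkShiftHom φ g hinjg hgg) := by subst h; rfl

lemma shift_inj (a : ZMod n) : Function.Injective (fun i : ZMod n => i + a) :=
  fun x y h => by simpa using add_right_cancel (h : x + a = y + a)

lemma shift_hf (a : ZMod n) : ∀ i : ZMod n, (fun i : ZMod n => i + a) i + 1
    = (fun i : ZMod n => i + a) (i + 1) := fun i => (add_right_comm i a 1).symm ▸ add_right_comm i 1 a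

lemma shift2_inj (a b : ZMod n) : Function.Injective (fun i : ZMod n => i + b + a) :=
  fun x y h => by
    have := add_right_cancel (h : x + b + a = y + b + a)
    simpa using add_right_cancel this

lemma shift2_hf (a b : ZMod n) : ∀ i : ZMod n, (fun i : ZMod n => i + b + a) i + 1
    = (fun i : ZMod n => i + b + a) (i + 1) := by
  intro i
  show i + b + a + 1 = i + 1 + b + a
  ring

lemma id_inj : Function.Injective (fun i : ZMod n => i) := fun x y h => h

lemma id_hf : ∀ i : ZMod n, (fun i : ZMod n => i) i + 1 = (fun i : ZMod n => i) (i + 1) :=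
  fun _ => rfl

lemma rotObj_eq_mkShift (a : ZMod n) (Q : AObj k n) :
    rotObj a Q = mkShift Q (fun i => i + a) (shift_inj a) (shift_hf a) := rfl

lemma rotObj_rotObj (a b : ZMod n) (Q : AObj k n) :
    rotObj b (rotObj a Q) = rotObj (b + a) Q := by
  have h1 : rotObj b (rotObj a Q)
      = mkShift Q (fun i => i + b + a) (shift2_inj a b) (shift2_hf a b) := rfl
  have h2 : rotObj (b + a) Q
      = mkShift Q (fun i => i + (b + a)) (shift_inj (b + a)) (shift_hf (b + a)) := rfl
  rw [h1, h2]
  exact mkShift_congr Q (funext fun i => add_assoc i b a) _ _ _ _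

lemma rotObj_zero (Q : AObj k n) : rotObj (0 : ZMod n) Q = Q := by
  have h1 : rotObj (0 : ZMod n) Q
      = mkShift Q (fun i => i + 0) (shift_inj 0) (shift_hf 0) := rfl
  have h2 : Q = mkShift Q (fun i => i) id_inj id_hf := rfl
  rw [h1, h2]
  exact mkShift_congr Q (funext fun i => add_zero i) _ _ _ _

/-- composition law for the rotation functors. -/
lemma rot_comp (a b : ZMod n) (k : Type) [Field k] :
    rot k n a ⋙ rot k n b = rot k n (b + a) := by
  apply CategoryTheory.Functor.hext
  · intro Q
    exact rotObj_rotObj a b Q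
  · intro Q Q' φ
    show HEq ((rot k n b).map ((rot k n a).map φ)) ((rot k n (b + a)).map φ)
    have h1 : HEq ((rot k n b).map ((rot k n a).map φ))
        (mkShiftHom φ (fun i => i + b + a) (shift2_inj a b) (shift2_hf a b)) := HEq.rfl
    have h2 : HEq ((rot k n (b + a)).map φ)
        (mkShiftHom φ (fun i => i + (b + a)) (shift_inj (b + a)) (shift_hf (b + a))) := HEq.rfl
    exact h1.trans ((mkShiftHom_congr φ (funext fun i => add_assoc i b a) _ _ _ _).trans h2.symm)

lemma rot_zero (k : Type) [Field k] : 𝟭 (AObj k n) = rot k n (0 : ZMod n) := by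
  apply CategoryTheory.Functor.hext
  · intro Q
    exact (rotObj_zero Q).symm
  · intro Q Q' φ
    show HEq φ ((rot k n (0 : ZMod n)).map φ)
    have h1 : HEq φ (mkShiftHom φ (fun i => i) id_inj id_hf) := HEq.rfl
    have h2 : HEq ((rot k n (0 : ZMod n)).map φ)
        (mkShiftHom φ (fun i => i + 0) (shift_inj 0) (shift_hf 0)) := HEq.rfl
    exact h1.trans ((mkShiftHom_congr φ (funext fun i => (add_zero i).symm) _ _ _ _).trans h2.symm)

end Aux4
section Aux5

open CategoryTheory

variable {k : Type} [Field k] {n : ℕ}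

lemma AObj.eqToHom_f₀ {Q₁ Q₂ : AObj k n} (h : Q₁ = Q₂) :
    HEq (eqToHom h).f₀ (LinearMap.id : Q₁.V →ₗ[k] Q₁.V) := by subst h; rfl

lemma AObj.eqToHom_f {Q₁ Q₂ : AObj k n} (h : Q₁ = Q₂) (i : ZMod n) :
    HEq ((eqToHom h).f i) (LinearMap.id : Q₁.E i →ₗ[k] Q₁.E i) := by subst h; rfl

lemma AObj.ecast_heq_id (Q : AObj k n) {σ τ : ZMod n} (e : σ = τ) :
    HEq (Q.ecast e).toLinearMap (LinearMap.id : Q.E σ →ₗ[k] Q.E σ) := by subst e; rfl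

lemma γδδ (Q : AObj k n) {i j : ZMod n} (e : i + 1 = j) (x : Q.E i) :
    Q.γ j (Q.δ (i + 1) (Q.γ (i + 1) (Q.δ i x))) = Q.γ j (Q.δ i x) := by
  subst e
  rw [Q.c1_apply]

end Aux5

theorem coboundary_action (k : Type) [Field k] (n : ℕ) (hn : 2 ≤ n) :
    ∃ (β₁ : 𝟭 (AObj k n) ≅ rot k n (1 : ZMod n))
      (β : ∀ m : ℤ, 𝟭 (AObj k n) ≅ rotZ k n m),
      -- the edge components of `β₁` at any object `Q` are the fractional
      -- monodromies `Tᵢ = γ_{i+1} ∘ δᵢ : Eᵢ → E_{i+1}`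
      (∀ (Q : AObj k n) (i : ZMod n),
        (β₁.hom.app Q).f i = (Q.γ (i + 1)).comp (Q.δ i)) ∧
      -- `β 1` is `β₁` (transported along `(1 : ℤ)_* = (1 : ℤ/n)_*`)
      (∃ h1 : rot k n (1 : ZMod n) = rotZ k n 1,
        (β 1).hom = β₁.hom ≫ eqToHom h1) ∧
      -- `β 0` is the identity (transported along `Id = 0_*`)
      (∃ h0 : 𝟭 (AObj k n) = rotZ k n 0, (β 0).hom = eqToHom h0) ∧
      -- the coboundary property `β_{p+q} = (p_* β_q) ∘ β_p`
      (∀ p q : ℤ, ∃ hpq : rotZ k n q ⋙ rotZ k n p = rotZ k n (p + q),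
        (β (p + q)).hom =
          (β p).hom ≫ Functor.whiskerRight (β q).hom (rotZ k n p) ≫ eqToHom hpq) := by
  haveI : NeZero n := ⟨by omega⟩
  refine ⟨β₁Iso hn, fun m => bIso hn m, fun Q i => rfl, ?_, ?_, ?_⟩
  · -- β 1 = β₁ ∘ eqToHom
    have h1 : rot k n (1 : ZMod n) = rotZ k n 1 :=
      congrArg (rot k n) (Int.cast_one (R := ZMod n)).symm
    refine ⟨h1, ?_⟩
    apply NatTrans.ext
    funext Q
    have hQ : (rot k n (1 : ZMod n)).obj Q = (rotZ k n 1).obj Q :=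
      Functor.congr_obj h1 Q
    have happ : ((β₁Iso hn).hom ≫ eqToHom h1).app Q
        = (β₁Iso hn).hom.app Q ≫ eqToHom hQ := by
      rw [NatTrans.comp_app, eqToHom_app]
    rw [happ]
    apply AHom.ext
    · apply LinearMap.ext
      intro x
      have hid : (eqToHom hQ).f₀ = (LinearMap.id : Q.V →ₗ[k] Q.V) :=
        eq_of_heq (AObj.eqToHom_f₀ hQ)
      show ((uEquiv hn Q) ^ (1:ℤ)) x = (eqToHom hQ).f₀ ((oneHom hn Q).f₀ x)
      rw [hid, zpow_one]
      rfl
    · funext i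
      apply LinearMap.ext
      intro x
      have e : i + 1 = i + ((1:ℤ) : ZMod n) := by push_cast; ring
      have he : (eqToHom hQ).f i = (Q.ecast e).toLinearMap :=
        eq_of_heq ((AObj.eqToHom_f hQ i).trans (Q.ecast_heq_id e).symm)
      show Q.γ (i + ((1:ℤ) : ZMod n)) (((uEquiv hn Q) ^ (1:ℤ)) (Q.δ i x))
        = (eqToHom hQ).f i (Q.γ (i + 1) (Q.δ i x))
      rw [he, zpow_one, uEquiv_apply, uMap_δ hn Q i x, γδδ Q e]
      have h2 := LinearMap.congr_fun (Q.γ_ecast e) (Q.δ i x)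
      rw [LinearMap.comp_apply] at h2
      exact h2.symm
  · -- β 0 = eqToHom
    have h0 : 𝟭 (AObj k n) = rotZ k n 0 :=
      (rot_zero k).trans (congrArg (rot k n) (Int.cast_zero (R := ZMod n)).symm)
    refine ⟨h0, ?_⟩
    apply NatTrans.ext
    funext Q
    have hQ : Q = (rotZ k n 0).obj Q := Functor.congr_obj h0 Q
    have happ : (eqToHom h0).app Q = eqToHom hQ := eqToHom_app h0 Q
    rw [happ]
    apply AHom.ext
    · apply LinearMap.ext
      intro x
      have hid : (eqToHom hQ).f₀ = (LinearMap.id : Q.V →ₗ[k] Q.V) :=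
        eq_of_heq (AObj.eqToHom_f₀ hQ)
      show ((uEquiv hn Q) ^ (0:ℤ)) x = (eqToHom hQ).f₀ x
      rw [hid, zpow_zero]
      rfl
    · funext i
      apply LinearMap.ext
      intro x
      have e : i = i + ((0:ℤ) : ZMod n) := by push_cast; ring
      have he : (eqToHom hQ).f i = (Q.ecast e).toLinearMap :=
        eq_of_heq ((AObj.eqToHom_f hQ i).trans (Q.ecast_heq_id e).symm)
      show Q.γ (i + ((0:ℤ) : ZMod n)) (((uEquiv hn Q) ^ (0:ℤ)) (Q.δ i x))
        = (eqToHom hQ).f i x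
      rw [he, zpow_zero]
      have h1 := LinearMap.congr_fun (Q.γδ_ecast e) x
      rw [LinearMap.comp_apply] at h1
      have h2 : ((1 : Q.V ≃ₗ[k] Q.V)) ((Q.δ i) x) = (Q.δ i) x := rfl
      rw [h2]
      exact h1
  · -- cocycle
    intro p q
    have hpq : rotZ k n q ⋙ rotZ k n p = rotZ k n (p + q) :=
      (rot_comp ((q : ZMod n)) ((p : ZMod n)) k).trans
        (congrArg (rot k n) (by push_cast; ring))
    refine ⟨hpq, ?_⟩
    apply NatTrans.ext
    funext Q
    have hQ : (rotZ k n p).obj ((rotZ k n q).obj Q) = (rotZ k n (p + q)).obj Q :=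
      Functor.congr_obj hpq Q
    have happ : ((bIso hn p).hom ≫ Functor.whiskerRight (bIso hn q).hom (rotZ k n p)
          ≫ eqToHom hpq).app Q
        = (bIso hn p).hom.app Q ≫ (rotZ k n p).map ((bIso hn q).hom.app Q)
          ≫ eqToHom hQ := by
      rw [NatTrans.comp_app, NatTrans.comp_app, Functor.whiskerRight_app, eqToHom_app]
    rw [happ]
    have hpow : ∀ x : Q.V, ((uEquiv hn Q) ^ (p + q)) x
        = ((uEquiv hn Q) ^ q) (((uEquiv hn Q) ^ p) x) := by
      intro x
      rw [add_comm, zpow_add]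
      rfl
    apply AHom.ext
    · apply LinearMap.ext
      intro x
      have hid : (eqToHom hQ).f₀
          = (LinearMap.id : Q.V →ₗ[k] Q.V) := eq_of_heq (AObj.eqToHom_f₀ hQ)
      show ((uEquiv hn Q) ^ (p + q)) x
        = (eqToHom hQ).f₀ (((uEquiv hn Q) ^ q) (((uEquiv hn Q) ^ p) x))
      rw [hid, hpow]
      rfl
    · funext i
      apply LinearMap.ext
      intro x
      have e : (i + (p : ZMod n)) + (q : ZMod n) = i + ((p + q : ℤ) : ZMod n) := by
        push_cast; ring
      have he : (eqToHom hQ).f i = (Q.ecast e).toLinearMap :=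
        eq_of_heq ((AObj.eqToHom_f hQ i).trans (Q.ecast_heq_id e).symm)
      obtain ⟨D, hD⟩ := exists_D hn Q p i
      show Q.γ (i + ((p + q : ℤ) : ZMod n)) (((uEquiv hn Q) ^ (p + q)) (Q.δ i x))
        = (eqToHom hQ).f i (Q.γ ((i + (p : ZMod n)) + (q : ZMod n))
            (((uEquiv hn Q) ^ q) (Q.δ (i + (p : ZMod n))
              (Q.γ (i + (p : ZMod n)) (((uEquiv hn Q) ^ p) (Q.δ i x))))))
      rw [he, hD, Q.c1_apply, ← hD, ← hpow]
      have h1 := LinearMap.congr_fun (Q.γ_ecast e) (((uEquiv hn Q) ^ (p + q)) (Q.δ i x))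
      rw [LinearMap.comp_apply] at h1
      exact h1.symm
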